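/- Let M ⊆ ℝ be the attractor of the iterated function system {x ↦ x/5, x ↦ x/5 + 2/5, x ↦ x/5 + 4/5} (the {1,3,5}-set) and let M' ⊆ ℝ be the attractor of the iterated function system {x ↦ x/5, x ↦ x/5 + 3/5, x ↦ x/5 + 4/5} (the {1,4,5}-set). Then M and M' are Lipschitz equivalent. -/

import Mathlib

open Set Metric MeasureTheory

noncomputable section

/-- Two subsets of a metric space are Lipschitz equivalent if there is a
bi-Lipschitz bijection between them. -/
def LipschitzEquivalent {X : Type*} [MetricSpace X] (E F : Set X) : Prop :=
  ∃ (f : X → X) (C : ℝ), 0 < C ∧ Set.BijOn f E F ∧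
    ∀ x ∈ E, ∀ y ∈ E,
      C⁻¹ * dist x y ≤ dist (f x) (f y) ∧ dist (f x) (f y) ≤ C * dist x y

/-- `φ` is a similarity with ratio `r`. -/
def IsSimilarity {X : Type*} [MetricSpace X] (r : ℝ) (φ : X → X) : Prop :=
  ∀ x y, dist (φ x) (φ y) = r * dist x y

/-- `ρ = (ρ₁, …, ρ_m)` is a contraction vector for `ℝ^d`. -/
def IsContractionVector (d m : ℕ) (ρ : Fin m → ℝ) : Prop :=
  (∀ j, ρ j ∈ Set.Ioo (0:ℝ) 1) ∧ ∑ j, ρ j ^ d < 1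

/-- `E` is a dust-like self-similar set with contraction vector `ρ`,
i.e. `E ∈ D(ρ)`. -/
def IsDustLike {X : Type*} [MetricSpace X] {m : ℕ} (ρ : Fin m → ℝ) (E : Set X) : Prop :=
  E.Nonempty ∧ IsCompact E ∧
  ∃ φ : Fin m → X → X,
    (∀ j, IsSimilarity (ρ j) (φ j)) ∧
    E = ⋃ j, φ j '' E ∧
    Pairwise fun j k => Disjoint (φ j '' E) (φ k '' E)

namespace RRX

inductive S | A | B0 | B1 | C0 | C1 | C2
  deriving DecidableEq

instance : Fintype S :=
  ⟨⟨↑[S.A, S.B0, S.B1, S.C0, S.C1, S.C2], by decide⟩, fun x => by cases x <;> decide⟩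

open S

def tr (s : S) (d : Fin 3) : S :=
  match s, d.val with
  | A, 0 => A | A, 1 => B0 | A, _ => B1
  | B0, 0 => C0 | B0, 1 => C1 | B0, _ => C2
  | B1, 0 => A | B1, 1 => B0 | B1, _ => B1
  | C0, 0 => C0 | C0, 1 => C1 | C0, _ => C2
  | C1, 0 => C0 | C1, 1 => C1 | C1, _ => C2
  | C2, 0 => A | C2, 1 => B0 | C2, _ => B1

def ow (s : S) (d : Fin 3) : ℕ :=
  match s, d.val with
  | A, 0 => 0 | A, _ => 3
  | B0, _ => 3
  | B1, 0 => 0 | B1, _ => 8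
  | C0, _ => 3
  | C1, _ => 8
  | C2, 0 => 0 | C2, _ => 13

def wd : S → ℕ
  | A => 1 | B0 => 2 | B1 => 2 | C0 => 3 | C1 => 3 | C2 => 3

lemma key1 : ∀ (s : S) (d : Fin 3), ow s d + wd (tr s d) ≤ 5 * wd s := by decide
lemma owle : ∀ (s : S) (d : Fin 3), ow s d ≤ 13 := by decide
lemma wdle : ∀ s : S, wd s ≤ 3 := by decide
lemma wdpos : ∀ s : S, 0 < wd s := by decide

lemma summable_aux (a : ℕ → ℕ) (B : ℕ) (hb : ∀ k, a k ≤ B) :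
    Summable (fun k => (a k : ℝ) * (1/5)^(k+1)) := by
  have hg : Summable (fun k : ℕ => ((B:ℝ)/5) * (1/5)^k) :=
    (summable_geometric_of_lt_one (by norm_num) (by norm_num)).mul_left _
  refine Summable.of_nonneg_of_le (fun k => by positivity) (fun k => ?_) hg
  have h1 : (a k : ℝ) ≤ B := by exact_mod_cast hb k
  calc (a k : ℝ) * (1/5)^(k+1) ≤ (B:ℝ) * (1/5)^(k+1) :=
        mul_le_mul_of_nonneg_right h1 (by positivity)
    _ = ((B:ℝ)/5) * (1/5)^k := by ring

def run : S → (ℕ → Fin 3) → ℕ → S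
  | s, _, 0 => s
  | s, e, n+1 => run (tr s (e 0)) (fun k => e (k+1)) n

@[simp] lemma run_zero (s e) : run s e 0 = s := rfl
@[simp] lemma run_succ (s e n) : run s e (n+1) = run (tr s (e 0)) (fun k => e (k+1)) n := rfl

lemma run_succ' (s e n) : run s e (n+1) = tr (run s e n) (e n) := by
  induction n generalizing s e with
  | zero => rfl
  | succ n ih => exact ih (tr s (e 0)) (fun k => e (k+1))

def outSeq (s : S) (e : ℕ → Fin 3) (k : ℕ) : ℕ := ow (run s e k) (e k)

noncomputable def F (s : S) (e : ℕ → Fin 3) : ℝ := ∑' k, (outSeq s e k : ℝ) * (1/5)^(k+1)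

noncomputable def pS (s : S) (e : ℕ → Fin 3) (n : ℕ) : ℝ :=
  ∑ k ∈ Finset.range n, (outSeq s e k : ℝ) * (1/5)^(k+1)

lemma summable_F (s e) : Summable (fun k => (outSeq s e k : ℝ) * (1/5)^(k+1)) :=
  summable_aux _ 13 (fun k => owle _ _)

lemma F_step (s e) : F s e = ((ow s (e 0) : ℝ) + F (tr s (e 0)) (fun k => e (k+1))) / 5 := by
  have h := Summable.tsum_eq_zero_add (summable_F s e)
  have h2 : ∀ k : ℕ, (outSeq s e (k+1) : ℝ) * (1/5)^(k+1+1)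
      = ((outSeq (tr s (e 0)) (fun j => e (j+1)) k : ℝ) * (1/5)^(k+1)) * (1/5) := by
    intro k
    have : outSeq s e (k+1) = outSeq (tr s (e 0)) (fun j => e (j+1)) k := rfl
    rw [this]; ring
  rw [F, h]
  simp only [h2]
  rw [tsum_mul_right]
  show (outSeq s e 0 : ℝ) * (1/5)^(0+1) + F (tr s (e 0)) (fun j => e (j+1)) * (1/5) = _
  have : outSeq s e 0 = ow s (e 0) := rfl
  rw [this]; ring

lemma pS_succ (s e n) :
    pS s e (n+1) = ((ow s (e 0) : ℝ) + pS (tr s (e 0)) (fun k => e (k+1)) n) / 5 := by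
  rw [pS, Finset.sum_range_succ']
  have h2 : ∀ k : ℕ, (outSeq s e (k+1) : ℝ) * (1/5)^(k+1+1)
      = ((outSeq (tr s (e 0)) (fun j => e (j+1)) k : ℝ) * (1/5)^(k+1)) * (1/5) := by
    intro k
    have : outSeq s e (k+1) = outSeq (tr s (e 0)) (fun j => e (j+1)) k := rfl
    rw [this]; ring
  simp only [h2]
  rw [← Finset.sum_mul]
  show pS (tr s (e 0)) (fun j => e (j+1)) n * (1/5) + (outSeq s e 0 : ℝ) * (1/5)^(0+1) = _
  have : outSeq s e 0 = ow s (e 0) := rfl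
  rw [this]; ring

lemma pS_le (n : ℕ) : ∀ s e, pS s e n ≤ wd s := by
  induction n with
  | zero => intro s e; simp [pS]
  | succ n ih =>
    intro s e
    rw [pS_succ]
    have h1 := ih (tr s (e 0)) (fun k => e (k+1))
    have h2 : (ow s (e 0) : ℝ) + wd (tr s (e 0)) ≤ 5 * wd s := by
      exact_mod_cast key1 s (e 0)
    linarith

lemma F_nonneg (s e) : 0 ≤ F s e :=
  tsum_nonneg (fun k => by positivity)

lemma F_le (s e) : F s e ≤ wd s :=
  Summable.tsum_le_of_sum_range_le (summable_F s e) (fun n => pS_le n s e)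

lemma F_le_three (s e) : F s e ≤ 3 := by
  have := F_le s e
  have h2 : (wd s : ℝ) ≤ 3 := by exact_mod_cast wdle s
  linarith

lemma F_decomp (n : ℕ) : ∀ s e, F s e = pS s e n + (1/5)^n * F (run s e n) (fun k => e (k+n)) := by
  induction n with
  | zero => intro s e; simp [pS]
  | succ n ih =>
    intro s e
    rw [F_step, pS_succ, ih (tr s (e 0)) (fun k => e (k+1))]
    have he : (fun k => (fun j => e (j+1)) (k+n)) = fun k => e (k+(n+1)) := by
      funext k; rfl
    rw [run_succ]
    rw [he]
    ring


lemma run_congr (n : ℕ) : ∀ s e e', (∀ k < n, e k = e' k) → run s e n = run s e' n := by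
  induction n with
  | zero => intro s e e' _; rfl
  | succ n ih =>
    intro s e e' h
    rw [run_succ, run_succ, h 0 (Nat.succ_pos n)]
    exact ih _ _ _ (fun k hk => h (k+1) (by omega))

lemma pS_congr (n : ℕ) (s e e') (h : ∀ k < n, e k = e' k) : pS s e n = pS s e' n := by
  unfold pS
  apply Finset.sum_congr rfl
  intro k hk
  rw [Finset.mem_range] at hk
  have h1 : run s e k = run s e' k := run_congr k s e e' (fun j hj => h j (by omega))
  unfold outSeq
  rw [h1, h k hk]

/-- the fundamental gap estimate -/
lemma F_gap2 (s1 s1' : S) (E1 E1' : ℕ → Fin 3)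
    (h : ow s1 (E1 0) + 2 + wd (tr s1 (E1 0)) ≤ ow s1' (E1' 0)) :
    F s1 E1 + 2/5 ≤ F s1' E1' := by
  rw [F_step s1 E1, F_step s1' E1']
  have h1 : F (tr s1 (E1 0)) (fun k => E1 (k+1)) ≤ wd (tr s1 (E1 0)) := F_le _ _
  have h2 : 0 ≤ F (tr s1' (E1' 0)) (fun k => E1' (k+1)) := F_nonneg _ _
  have h3 : (ow s1 (E1 0) : ℝ) + 2 + wd (tr s1 (E1 0)) ≤ ow s1' (E1' 0) := by exact_mod_cast h
  linarith

lemma key2 : ∀ (s : S) (d d' : Fin 3), d ≠ d' →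
    (ow s d + 2 + wd (tr s d) ≤ ow s d') ∨ (ow s d' + 2 + wd (tr s d') ≤ ow s d) ∨
    (ow s d = ow s d' ∧ ∀ d2 d2' : Fin 3,
       (ow (tr s d) d2 + 2 + wd (tr (tr s d) d2) ≤ ow (tr s d') d2') ∨
       (ow (tr s d') d2' + 2 + wd (tr (tr s d') d2') ≤ ow (tr s d) d2)) := by decide

lemma F_sep (s : S) (E E' : ℕ → Fin 3) (h : E 0 ≠ E' 0) :
    2/25 ≤ |F s E - F s E'| := by
  rcases key2 s (E 0) (E' 0) h with h1 | h1 | ⟨heq, h1⟩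
  · have := F_gap2 s s E E' h1
    rw [abs_sub_comm, abs_of_nonneg (by linarith)]
    linarith
  · have := F_gap2 s s E' E h1
    rw [abs_of_nonneg (by linarith)]
    linarith
  · rw [F_step s E, F_step s E']
    have heq' : (ow s (E 0) : ℝ) = ow s (E' 0) := by exact_mod_cast heq
    set G := F (tr s (E 0)) (fun k => E (k+1)) with hG
    set G' := F (tr s (E' 0)) (fun k => E' (k+1)) with hG'
    have key : 2/5 ≤ |G - G'| := by
      rcases h1 ((fun k => E (k+1)) 0) ((fun k => E' (k+1)) 0) with h2 | h2
      · have := F_gap2 _ _ (fun k => E (k+1)) (fun k => E' (k+1)) h2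
        rw [abs_sub_comm, abs_of_nonneg (by linarith)]
        linarith
      · have := F_gap2 _ _ (fun k => E' (k+1)) (fun k => E (k+1)) h2
        rw [abs_of_nonneg (by linarith)]
        linarith
    have : ((ow s (E 0) : ℝ) + G) / 5 - ((ow s (E' 0) : ℝ) + G') / 5 = (G - G') / 5 := by
      rw [heq']; ring
    rw [this, abs_div]
    rw [abs_of_pos (by norm_num : (0:ℝ) < 5)]
    linarith

/-- F values differ by between (2/25)·5⁻ⁿ and 3·5⁻ⁿ when codes first differ at n -/
lemma F_dist (e e' : ℕ → Fin 3) (n : ℕ) (hlt : ∀ k < n, e k = e' k) (hne : e n ≠ e' n) :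
    2/25 * (1/5)^n ≤ |F S.A e - F S.A e'| ∧ |F S.A e - F S.A e'| ≤ 3 * (1/5)^n := by
  have hd := F_decomp n S.A e
  have hd' := F_decomp n S.A e'
  have hrun : run S.A e n = run S.A e' n := run_congr n _ _ _ hlt
  have hps : pS S.A e n = pS S.A e' n := pS_congr n _ _ _ hlt
  have hdiff : F S.A e - F S.A e' =
      (1/5)^n * (F (run S.A e n) (fun k => e (k+n)) - F (run S.A e n) (fun k => e' (k+n))) := by
    rw [hd, hd', hps, hrun]; ring
  have h0 : (fun k => e (k+n)) 0 ≠ (fun k => e' (k+n)) 0 := by simpa using hne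
  have hsep := F_sep (run S.A e n) (fun k => e (k+n)) (fun k => e' (k+n)) h0
  have hub : |F (run S.A e n) (fun k => e (k+n)) - F (run S.A e n) (fun k => e' (k+n))| ≤ 3 := by
    rw [abs_sub_le_iff]
    constructor
    · have := F_le_three (run S.A e n) (fun k => e (k+n))
      have := F_nonneg (run S.A e n) (fun k => e' (k+n))
      linarith
    · have := F_le_three (run S.A e n) (fun k => e' (k+n))
      have := F_nonneg (run S.A e n) (fun k => e (k+n))
      linarith
  rw [hdiff, abs_mul, abs_of_pos (by positivity : (0:ℝ) < (1/5)^n)]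
  set D := |F (run S.A e n) (fun k => e (k+n)) - F (run S.A e n) (fun k => e' (k+n))| with hD
  have hp : (0:ℝ) < (1/5)^n := by positivity
  constructor
  · nlinarith
  · nlinarith


/-! ### coding of the {1,3,5} set -/

noncomputable def pc (e : ℕ → Fin 3) : ℝ := ∑' k, ((2 * (e k : ℕ) : ℕ) : ℝ) * (1/5)^(k+1)

noncomputable def pcS (e : ℕ → Fin 3) (n : ℕ) : ℝ :=
  ∑ k ∈ Finset.range n, ((2 * (e k : ℕ) : ℕ) : ℝ) * (1/5)^(k+1)

lemma summable_pc (e : ℕ → Fin 3) : Summable (fun k => ((2 * (e k : ℕ) : ℕ) : ℝ) * (1/5)^(k+1)) :=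
  summable_aux _ 4 (fun k => by have := (e k).isLt; omega)

lemma pc_step (e : ℕ → Fin 3) : pc e = (((2 * (e 0 : ℕ) : ℕ) : ℝ) + pc (fun k => e (k+1))) / 5 := by
  have h := Summable.tsum_eq_zero_add (summable_pc e)
  have h2 : ∀ k : ℕ, ((2 * (e (k+1) : ℕ) : ℕ) : ℝ) * (1/5)^(k+1+1)
      = (((2 * ((fun j => e (j+1)) k : ℕ) : ℕ) : ℝ) * (1/5)^(k+1)) * (1/5) := by
    intro k; ring
  rw [pc, h]
  simp only [h2]
  rw [tsum_mul_right]
  show ((2 * (e 0 : ℕ) : ℕ) : ℝ) * (1/5)^(0+1) + pc (fun j => e (j+1)) * (1/5) = _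
  ring

lemma pcS_succ (e : ℕ → Fin 3) (n : ℕ) :
    pcS e (n+1) = (((2 * (e 0 : ℕ) : ℕ) : ℝ) + pcS (fun k => e (k+1)) n) / 5 := by
  rw [pcS, Finset.sum_range_succ']
  have h2 : ∀ k : ℕ, ((2 * (e (k+1) : ℕ) : ℕ) : ℝ) * (1/5)^(k+1+1)
      = (((2 * ((fun j => e (j+1)) k : ℕ) : ℕ) : ℝ) * (1/5)^(k+1)) * (1/5) := by
    intro k; ring
  simp only [h2]
  rw [← Finset.sum_mul]
  show pcS (fun j => e (j+1)) n * (1/5) + ((2 * (e 0 : ℕ) : ℕ) : ℝ) * (1/5)^(0+1) = _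
  ring

lemma pcS_le (n : ℕ) : ∀ e, pcS e n ≤ 1 := by
  induction n with
  | zero => intro e; simp [pcS]
  | succ n ih =>
    intro e
    rw [pcS_succ]
    have h1 := ih (fun k => e (k+1))
    have h2 : (e 0 : ℕ) ≤ 2 := by omega
    have h3 : ((2 * (e 0 : ℕ) : ℕ) : ℝ) ≤ 4 := by exact_mod_cast Nat.mul_le_mul_left 2 h2
    linarith

lemma pc_nonneg (e : ℕ → Fin 3) : 0 ≤ pc e := tsum_nonneg (fun k => by positivity)

lemma pc_le_one (e : ℕ → Fin 3) : pc e ≤ 1 :=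
  Summable.tsum_le_of_sum_range_le (summable_pc e) (fun n => pcS_le n e)

lemma pc_decomp (n : ℕ) : ∀ e, pc e = pcS e n + (1/5)^n * pc (fun k => e (k+n)) := by
  induction n with
  | zero => intro e; simp [pcS]
  | succ n ih =>
    intro e
    rw [pc_step, pcS_succ, ih (fun k => e (k+1))]
    have he : (fun k => (fun j => e (j+1)) (k+n)) = fun k => e (k+(n+1)) := by
      funext k; rfl
    rw [he]; ring

lemma pcS_congr (n : ℕ) (e e') (h : ∀ k < n, e k = e' k) : pcS e n = pcS e' n := by
  unfold pcS
  apply Finset.sum_congr rfl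
  intro k hk
  rw [Finset.mem_range] at hk
  rw [h k hk]

lemma pc_sep (E E' : ℕ → Fin 3) (h : E 0 ≠ E' 0) : 1/5 ≤ |pc E - pc E'| := by
  rw [pc_step E, pc_step E']
  have hv : (2:ℝ) ≤ |((2 * (E 0 : ℕ) : ℕ) : ℝ) - ((2 * (E' 0 : ℕ) : ℕ) : ℝ)| := by
    have hne : (E 0 : ℕ) ≠ (E' 0 : ℕ) := fun hc => h (Fin.ext hc)
    have h4 : (2:ℤ) ≤ |2 * ((E 0 : ℕ):ℤ) - 2 * ((E' 0 : ℕ):ℤ)| := by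
      rcases abs_cases (2 * ((E 0 : ℕ):ℤ) - 2 * ((E' 0 : ℕ):ℤ)) with ⟨hh,_⟩|⟨hh,_⟩ <;> omega
    exact_mod_cast h4
  have t1 := pc_nonneg (fun k => E (k+1))
  have t2 := pc_le_one (fun k => E (k+1))
  have t3 := pc_nonneg (fun k => E' (k+1))
  have t4 := pc_le_one (fun k => E' (k+1))
  set a := ((2 * (E 0 : ℕ) : ℕ) : ℝ)
  set b := ((2 * (E' 0 : ℕ) : ℕ) : ℝ)
  set t := pc fun k => E (k+1)
  set t' := pc fun k => E' (k+1)
  have hre : (a + t)/5 - (b + t')/5 = ((a - b) + (t - t'))/5 := by ring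
  rw [hre, abs_div, abs_of_pos (by norm_num : (0:ℝ) < 5)]
  have h5 : |a - b| - |-(t - t')| ≤ |(a - b) - (-(t - t'))| :=
    abs_sub_abs_le_abs_sub (a - b) (-(t - t'))
  rw [abs_neg, sub_neg_eq_add] at h5
  have h7 : |t - t'| ≤ 1 := by
    rw [abs_sub_le_iff]; constructor <;> linarith
  linarith


lemma pc_dist (e e' : ℕ → Fin 3) (n : ℕ) (hlt : ∀ k < n, e k = e' k) (hne : e n ≠ e' n) :
    (1/5) * (1/5)^n ≤ |pc e - pc e'| ∧ |pc e - pc e'| ≤ (1/5)^n := by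
  have hd := pc_decomp n e
  have hd' := pc_decomp n e'
  have hps : pcS e n = pcS e' n := pcS_congr n _ _ hlt
  have hdiff : pc e - pc e' = (1/5)^n * (pc (fun k => e (k+n)) - pc (fun k => e' (k+n))) := by
    rw [hd, hd', hps]; ring
  have h0 : (fun k => e (k+n)) 0 ≠ (fun k => e' (k+n)) 0 := by simpa using hne
  have hsep := pc_sep (fun k => e (k+n)) (fun k => e' (k+n)) h0
  have hub : |pc (fun k => e (k+n)) - pc (fun k => e' (k+n))| ≤ 1 := by
    rw [abs_sub_le_iff]
    have := pc_le_one (fun k => e (k+n))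
    have := pc_nonneg (fun k => e (k+n))
    have := pc_le_one (fun k => e' (k+n))
    have := pc_nonneg (fun k => e' (k+n))
    constructor <;> linarith
  have hp : (0:ℝ) < (1/5)^n := by positivity
  rw [hdiff, abs_mul, abs_of_pos hp]
  set D := |pc (fun k => e (k+n)) - pc (fun k => e' (k+n))|
  constructor
  · nlinarith
  · nlinarith

lemma first_diff (e e' : ℕ → Fin 3) (h : e ≠ e') :
    ∃ n, (∀ k < n, e k = e' k) ∧ e n ≠ e' n := by
  classical
  have hex : ∃ n, e n ≠ e' n := by
    by_contra hc
    push_neg at hc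
    exact h (funext hc)
  exact ⟨Nat.find hex, fun k hk => not_not.mp (Nat.find_min hex hk), Nat.find_spec hex⟩

lemma pc_inj : Function.Injective pc := by
  intro e e' h
  by_contra hne
  obtain ⟨n, h1, h2⟩ := first_diff e e' hne
  have := (pc_dist e e' n h1 h2).1
  rw [h, sub_self, abs_zero] at this
  have hp : (0:ℝ) < (1/5) * (1/5)^n := by positivity
  linarith


/-! ### generic attractor facts -/

lemma attr_Icc (K : Set ℝ) (hK : IsCompact K) (hne : K.Nonempty)
    (h : ∀ x ∈ K, ∃ c ∈ Set.Icc (0:ℝ) 4, ∃ y ∈ K, x = (y + c)/5) :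
    K ⊆ Set.Icc 0 1 := by
  have hb : sSup K ≤ 1 := by
    obtain ⟨c, hc, y, hy, hxy⟩ := h (sSup K) (hK.sSup_mem hne)
    have h1 : y ≤ sSup K := le_csSup hK.bddAbove hy
    have := hc.2
    nlinarith [hc.1]
  have ha : 0 ≤ sInf K := by
    obtain ⟨c, hc, y, hy, hxy⟩ := h (sInf K) (hK.sInf_mem hne)
    have h1 : sInf K ≤ y := csInf_le hK.bddBelow hy
    nlinarith [hc.1, hc.2]
  intro x hx
  exact ⟨le_trans ha (csInf_le hK.bddBelow hx), le_trans (le_csSup hK.bddAbove hx) hb⟩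

lemma attr_zero_mem (K : Set ℝ) (hK : IsCompact K) (hne : K.Nonempty)
    (h : ∀ x ∈ K, x/5 ∈ K) : (0:ℝ) ∈ K := by
  obtain ⟨x0, hx0⟩ := hne
  have hmem : ∀ n : ℕ, x0 * (1/5)^n ∈ K := by
    intro n
    induction n with
    | zero => simpa using hx0
    | succ n ih =>
      have := h _ ih
      have he : x0 * (1/5)^(n+1) = (x0 * (1/5)^n)/5 := by ring
      rwa [he]
  have htend : Filter.Tendsto (fun n : ℕ => x0 * (1/5)^n) Filter.atTop (nhds 0) := by
    have := tendsto_pow_atTop_nhds_zero_of_lt_one (by norm_num : (0:ℝ) ≤ 1/5) (by norm_num)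
    have h2 := this.const_mul x0
    simpa using h2
  exact hK.isClosed.mem_of_tendsto htend (Filter.Eventually.of_forall hmem)


/-! ### the {1,3,5}-set -/

section Mside

variable (M : Set ℝ) (hMne : M.Nonempty) (hMcomp : IsCompact M)
  (hMdef : M = (fun x => x / 5) '' M ∪ (fun x => x / 5 + 2 / 5) '' M ∪
      (fun x => x / 5 + 4 / 5) '' M)

include hMdef in
lemma M_map : ∀ x ∈ M, ∀ d : Fin 3, (x + 2*(d:ℕ))/5 ∈ M := by
  intro x hx d
  have h0 : (x+0)/5 ∈ M := by
    rw [hMdef]; exact Or.inl (Or.inl ⟨x, hx, by ring⟩)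
  have h1 : (x+2)/5 ∈ M := by
    rw [hMdef]; exact Or.inl (Or.inr ⟨x, hx, by ring⟩)
  have h2 : (x+4)/5 ∈ M := by
    rw [hMdef]; exact Or.inr ⟨x, hx, by ring⟩
  rcases d with ⟨dv, hdv⟩
  interval_cases dv
  · simpa using h0
  · simpa using h1
  · norm_num
    simpa using h2
include hMne hMcomp hMdef in
lemma M_Icc : M ⊆ Set.Icc 0 1 := by
  apply attr_Icc M hMcomp hMne
  intro x hx
  rw [hMdef] at hx
  rcases hx with (⟨y,hy,rfl⟩|⟨y,hy,rfl⟩)|⟨y,hy,rfl⟩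
  · exact ⟨0, by norm_num, y, hy, by ring⟩
  · exact ⟨2, by norm_num, y, hy, by ring⟩
  · exact ⟨4, by norm_num, y, hy, by ring⟩

include hMne hMcomp hMdef in
lemma M_zero : (0:ℝ) ∈ M := by
  apply attr_zero_mem M hMcomp hMne
  intro x hx
  have := M_map M hMdef x hx 0
  simpa using this

include hMcomp hMdef in
lemma pc_mem (e : ℕ → Fin 3) (h0 : (0:ℝ) ∈ M) : pc e ∈ M := by
  have key : ∀ n, ∀ (e : ℕ → Fin 3), ∀ u ∈ M, pcS e n + (1/5)^n * u ∈ M := by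
    intro n
    induction n with
    | zero => intro e u hu; simpa [pcS] using hu
    | succ n ih =>
      intro e u hu
      have h1 := ih (fun k => e (k+1)) u hu
      have h2 := M_map M hMdef _ h1 (e 0)
      have he : pcS e (n+1) + (1/5)^(n+1) * u
          = ((pcS (fun k => e (k+1)) n + (1/5)^n * u) + 2*((e 0 : Fin 3):ℕ))/5 := by
        rw [pcS_succ]; push_cast; ring
      rw [he]
      exact h2
  have htend : Filter.Tendsto (fun n => pcS e n) Filter.atTop (nhds (pc e)) :=
    (summable_pc e).hasSum.tendsto_sum_nat
  apply hMcomp.isClosed.mem_of_tendsto htend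
  apply Filter.Eventually.of_forall
  intro n
  have := key n e 0 h0
  simpa using this

include hMdef in
lemma exists_code (hsub : M ⊆ Set.Icc 0 1) : ∀ x ∈ M, ∃ e : ℕ → Fin 3, pc e = x := by
  intro x hx
  have hstep : ∀ p : {x // x ∈ M}, ∃ q : Fin 3 × {x // x ∈ M},
      (q.2).1 = 5*p.1 - 2*((q.1 : Fin 3):ℕ) := by
    rintro ⟨p, hp⟩
    rw [hMdef] at hp
    rcases hp with (⟨y,hy,hyp⟩|⟨y,hy,hyp⟩)|⟨y,hy,hyp⟩
    · exact ⟨⟨0, ⟨y, hy⟩⟩, by simp at hyp ⊢; linarith⟩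
    · exact ⟨⟨1, ⟨y, hy⟩⟩, by simp at hyp ⊢; linarith⟩
    · exact ⟨⟨2, ⟨y, hy⟩⟩, by simp at hyp ⊢; linarith⟩
  choose g hg using hstep
  let X : ℕ → {x // x ∈ M} := fun n => Nat.rec ⟨x, hx⟩ (fun _ p => (g p).2) n
  let e : ℕ → Fin 3 := fun n => (g (X n)).1
  have hX : ∀ n, (X (n+1)).1 = 5*(X n).1 - 2*((e n : Fin 3):ℕ) := by
    intro n
    exact hg (X n)
  have hrec : ∀ n, x = pcS e n + (1/5)^n * (X n).1 := by
    intro n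
    induction n with
    | zero => simp [pcS, X]
    | succ n ih =>
      rw [ih]
      have h1 : pcS e (n+1) = pcS e n + ((2*((e n : Fin 3):ℕ) : ℕ) : ℝ) * (1/5)^(n+1) :=
        Finset.sum_range_succ _ n
      rw [h1, hX n]
      push_cast
      ring
  refine ⟨e, ?_⟩
  have htend : Filter.Tendsto (fun n => pcS e n) Filter.atTop (nhds (pc e)) :=
    (summable_pc e).hasSum.tendsto_sum_nat
  have htend2 : Filter.Tendsto (fun n => pcS e n) Filter.atTop (nhds x) := by
    have hb : ∀ n : ℕ, |x - pcS e n| ≤ (1/5)^n := by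
      intro n
      rw [hrec n]
      have h1 := (hsub (X n).2).1
      have h2 := (hsub (X n).2).2
      have hp : (0:ℝ) < (1/5)^n := by positivity
      rw [abs_le]
      constructor <;> nlinarith
    have h0 : Filter.Tendsto (fun n : ℕ => (1/5:ℝ)^n) Filter.atTop (nhds 0) :=
      tendsto_pow_atTop_nhds_zero_of_lt_one (by norm_num) (by norm_num)
    rw [tendsto_iff_dist_tendsto_zero]
    apply squeeze_zero (fun n => dist_nonneg) (fun n => ?_) h0
    rw [Real.dist_eq, abs_sub_comm]
    exact hb n
  exact tendsto_nhds_unique htend htend2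

end Mside


/-! ### the {1,4,5}-set and the sets N, P -/

def NNof (X : Set ℝ) : Set ℝ := X ∪ (fun x => x + 1) '' X
def PPof (X : Set ℝ) : Set ℝ := NNof X ∪ (fun x => x + 2) '' X

def SSof (X : Set ℝ) : S → Set ℝ
  | S.A => X
  | S.B0 => NNof X
  | S.B1 => NNof X
  | S.C0 => PPof X
  | S.C1 => PPof X
  | S.C2 => PPof X

section M'side

variable (M' : Set ℝ) (hM'ne : M'.Nonempty) (hM'comp : IsCompact M')
  (hM'def : M' = (fun x => x / 5) '' M' ∪ (fun x => x / 5 + 3 / 5) '' M' ∪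
      (fun x => x / 5 + 4 / 5) '' M')

include hM'def in
lemma b0 : ∀ y ∈ M', (y+0)/5 ∈ M' := by
  intro y hy
  rw [hM'def]; exact Or.inl (Or.inl ⟨y, hy, by ring⟩)

include hM'def in
lemma b3 : ∀ y ∈ M', (y+3)/5 ∈ M' := by
  intro y hy
  rw [hM'def]; exact Or.inl (Or.inr ⟨y, hy, by ring⟩)

include hM'def in
lemma b4 : ∀ y ∈ M', (y+4)/5 ∈ M' := by
  intro y hy
  rw [hM'def]; exact Or.inr ⟨y, hy, by ring⟩

lemma nL : M' ⊆ NNof M' := Set.subset_union_left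
lemma nR : ∀ y ∈ M', y + 1 ∈ NNof M' := fun y hy => Or.inr ⟨y, hy, rfl⟩
lemma pL : NNof M' ⊆ PPof M' := Set.subset_union_left
lemma pR : ∀ y ∈ M', y + 2 ∈ PPof M' := fun y hy => Or.inr ⟨y, hy, rfl⟩

include hM'def in
lemma tA3 : ∀ x ∈ NNof M', (x+3)/5 ∈ M' := by
  rintro x (hx | ⟨y, hy, rfl⟩)
  · exact b3 M' hM'def x hx
  · have : ((fun x => x + 1) y + 3)/5 = (y+4)/5 := by simp; ring
    rw [this]; exact b4 M' hM'def y hy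

include hM'def in
lemma tB3 : ∀ x ∈ PPof M', (x+3)/5 ∈ NNof M' := by
  rintro x (hx | ⟨y, hy, rfl⟩)
  · exact nL M' (tA3 M' hM'def x hx)
  · have : ((fun x => x + 2) y + 3)/5 = (y+0)/5 + 1 := by simp; ring
    rw [this]; exact nR M' _ (b0 M' hM'def y hy)

include hM'def in
lemma tB8 : ∀ x ∈ NNof M', (x+8)/5 ∈ NNof M' := by
  rintro x (hx | ⟨y, hy, rfl⟩)
  · have : (x+8)/5 = (x+3)/5 + 1 := by ring
    rw [this]; exact nR M' _ (b3 M' hM'def x hx)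
  · have : ((fun x => x + 1) y + 8)/5 = (y+4)/5 + 1 := by simp; ring
    rw [this]; exact nR M' _ (b4 M' hM'def y hy)

include hM'def in
lemma tC8 : ∀ x ∈ PPof M', (x+8)/5 ∈ PPof M' := by
  rintro x (hx | ⟨y, hy, rfl⟩)
  · exact pL M' (tB8 M' hM'def x hx)
  · have : ((fun x => x + 2) y + 8)/5 = (y+0)/5 + 2 := by simp; ring
    rw [this]; exact pR M' _ (b0 M' hM'def y hy)

include hM'def in
lemma tC13 : ∀ x ∈ NNof M', (x+13)/5 ∈ PPof M' := by
  rintro x (hx | ⟨y, hy, rfl⟩)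
  · have : (x+13)/5 = (x+3)/5 + 2 := by ring
    rw [this]; exact pR M' _ (b3 M' hM'def x hx)
  · have : ((fun x => x + 1) y + 13)/5 = (y+4)/5 + 2 := by simp; ring
    rw [this]; exact pR M' _ (b4 M' hM'def y hy)

include hM'def in
lemma trans_mem : ∀ (s : S) (d : Fin 3), ∀ x ∈ SSof M' (tr s d),
    (x + (ow s d : ℕ))/5 ∈ SSof M' s := by
  have c0 : ((0:ℕ):ℝ) = 0 := by norm_num
  have c3 : ((3:ℕ):ℝ) = 3 := by norm_num
  have c8 : ((8:ℕ):ℝ) = 8 := by norm_num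
  have c13 : ((13:ℕ):ℝ) = 13 := by norm_num
  intro s d x hx
  cases s <;> rcases d with ⟨dv, hdv⟩ <;> interval_cases dv
  · show (x + ((0:ℕ):ℝ))/5 ∈ M'
    rw [c0]; exact b0 M' hM'def x hx
  · show (x + ((3:ℕ):ℝ))/5 ∈ M'
    rw [c3]; exact tA3 M' hM'def x hx
  · show (x + ((3:ℕ):ℝ))/5 ∈ M'
    rw [c3]; exact tA3 M' hM'def x hx
  · show (x + ((3:ℕ):ℝ))/5 ∈ NNof M'
    rw [c3]; exact tB3 M' hM'def x hx
  · show (x + ((3:ℕ):ℝ))/5 ∈ NNof M'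
    rw [c3]; exact tB3 M' hM'def x hx
  · show (x + ((3:ℕ):ℝ))/5 ∈ NNof M'
    rw [c3]; exact tB3 M' hM'def x hx
  · show (x + ((0:ℕ):ℝ))/5 ∈ NNof M'
    rw [c0]; exact nL M' (b0 M' hM'def x hx)
  · show (x + ((8:ℕ):ℝ))/5 ∈ NNof M'
    rw [c8]; exact tB8 M' hM'def x hx
  · show (x + ((8:ℕ):ℝ))/5 ∈ NNof M'
    rw [c8]; exact tB8 M' hM'def x hx
  · show (x + ((3:ℕ):ℝ))/5 ∈ PPof M'
    rw [c3]; exact pL M' (tB3 M' hM'def x hx)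
  · show (x + ((3:ℕ):ℝ))/5 ∈ PPof M'
    rw [c3]; exact pL M' (tB3 M' hM'def x hx)
  · show (x + ((3:ℕ):ℝ))/5 ∈ PPof M'
    rw [c3]; exact pL M' (tB3 M' hM'def x hx)
  · show (x + ((8:ℕ):ℝ))/5 ∈ PPof M'
    rw [c8]; exact tC8 M' hM'def x hx
  · show (x + ((8:ℕ):ℝ))/5 ∈ PPof M'
    rw [c8]; exact tC8 M' hM'def x hx
  · show (x + ((8:ℕ):ℝ))/5 ∈ PPof M'
    rw [c8]; exact tC8 M' hM'def x hx
  · show (x + ((0:ℕ):ℝ))/5 ∈ PPof M'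
    rw [c0]; exact pL M' (nL M' (b0 M' hM'def x hx))
  · show (x + ((13:ℕ):ℝ))/5 ∈ PPof M'
    rw [c13]; exact tC13 M' hM'def x hx
  · show (x + ((13:ℕ):ℝ))/5 ∈ PPof M'
    rw [c13]; exact tC13 M' hM'def x hx


include hM'def in
lemma split_M : ∀ z ∈ M', 5*z ∈ M' ∨ 5*z - 3 ∈ NNof M' := by
  intro z hz
  rw [hM'def] at hz
  rcases hz with (⟨y,hy,rfl⟩|⟨y,hy,rfl⟩)|⟨y,hy,rfl⟩
  · left
    have : 5*(y/5) = y := by ring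
    rw [this]; exact hy
  · right
    have : 5*(y/5 + 3/5) - 3 = y := by ring
    rw [this]; exact nL M' hy
  · right
    have : 5*(y/5 + 4/5) - 3 = y + 1 := by ring
    rw [this]; exact nR M' y hy

include hM'def in
lemma split_N : ∀ z ∈ NNof M', 5*z ∈ M' ∨ 5*z - 3 ∈ PPof M' ∨ 5*z - 8 ∈ NNof M' := by
  rintro z (hz | ⟨y, hy, rfl⟩)
  · rcases split_M M' hM'def z hz with h | h
    · exact Or.inl h
    · exact Or.inr (Or.inl (pL M' h))
  · rw [hM'def] at hy
    rcases hy with (⟨w,hw,rfl⟩|⟨w,hw,rfl⟩)|⟨w,hw,rfl⟩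
    · right; left
      have : 5*((fun x => x + 1) (w/5)) - 3 = w + 2 := by simp; ring
      rw [this]; exact pR M' w hw
    · right; right
      have : 5*((fun x => x + 1) (w/5 + 3/5)) - 8 = w := by simp; ring
      rw [this]; exact nL M' hw
    · right; right
      have : 5*((fun x => x + 1) (w/5 + 4/5)) - 8 = w + 1 := by simp; ring
      rw [this]; exact nR M' w hw

include hM'def in
lemma split_P : ∀ z ∈ PPof M',
    5*z ∈ M' ∨ 5*z - 3 ∈ PPof M' ∨ 5*z - 8 ∈ PPof M' ∨ 5*z - 13 ∈ NNof M' := by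
  rintro z (hz | ⟨y, hy, rfl⟩)
  · rcases split_N M' hM'def z hz with h | h | h
    · exact Or.inl h
    · exact Or.inr (Or.inl h)
    · exact Or.inr (Or.inr (Or.inl (pL M' h)))
  · rw [hM'def] at hy
    rcases hy with (⟨w,hw,rfl⟩|⟨w,hw,rfl⟩)|⟨w,hw,rfl⟩
    · right; right; left
      have : 5*((fun x => x + 2) (w/5)) - 8 = w + 2 := by simp; ring
      rw [this]; exact pR M' w hw
    · right; right; right
      have : 5*((fun x => x + 2) (w/5 + 3/5)) - 13 = w := by simp; ring
      rw [this]; exact nL M' hw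
    · right; right; right
      have : 5*((fun x => x + 2) (w/5 + 4/5)) - 13 = w + 1 := by simp; ring
      rw [this]; exact nR M' w hw

include hM'ne hM'comp hM'def in
lemma M'_Icc : M' ⊆ Set.Icc 0 1 := by
  apply attr_Icc M' hM'comp hM'ne
  intro x hx
  rw [hM'def] at hx
  rcases hx with (⟨y,hy,rfl⟩|⟨y,hy,rfl⟩)|⟨y,hy,rfl⟩
  · exact ⟨0, by norm_num, y, hy, by ring⟩
  · exact ⟨3, by norm_num, y, hy, by ring⟩
  · exact ⟨4, by norm_num, y, hy, by ring⟩

include hM'ne hM'comp hM'def in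
lemma M'_zero : (0:ℝ) ∈ M' := by
  apply attr_zero_mem M' hM'comp hM'ne
  intro x hx
  have := b0 M' hM'def x hx
  rw [show (x+0)/5 = x/5 by ring] at this
  exact this

include hM'comp in
lemma SS_closed : ∀ s, IsClosed (SSof M' s) := by
  have h1 : IsCompact ((fun x => x + 1) '' M') :=
    hM'comp.image (continuous_add_right 1)
  have h2 : IsCompact ((fun x => x + 2) '' M') :=
    hM'comp.image (continuous_add_right 2)
  have hN : IsClosed (NNof M') := (hM'comp.union h1).isClosed
  have hP : IsClosed (PPof M') := ((hM'comp.union h1).union h2).isClosed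
  intro s
  cases s
  · exact hM'comp.isClosed
  all_goals first | exact hN | exact hP

lemma SS_zero (h0 : (0:ℝ) ∈ M') : ∀ s, (0:ℝ) ∈ SSof M' s := by
  intro s
  cases s
  · exact h0
  all_goals first | exact nL M' h0 | exact pL M' (nL M' h0)

lemma SS_bound (hsub : M' ⊆ Set.Icc 0 1) : ∀ s, ∀ x ∈ SSof M' s, 0 ≤ x ∧ x ≤ 3 := by
  have hN : ∀ x ∈ NNof M', 0 ≤ x ∧ x ≤ 2 := by
    rintro x (hx | ⟨y, hy, rfl⟩)
    · have := hsub hx; exact ⟨this.1, by linarith [this.2]⟩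
    · have := hsub hy
      simp only
      constructor <;> linarith [this.1, this.2]
  have hP : ∀ x ∈ PPof M', 0 ≤ x ∧ x ≤ 3 := by
    rintro x (hx | ⟨y, hy, rfl⟩)
    · have := hN x hx; exact ⟨this.1, by linarith [this.2]⟩
    · have := hsub hy
      simp only
      constructor <;> linarith [this.1, this.2]
  intro s
  cases s
  · intro x hx; have := hsub hx; exact ⟨this.1, by linarith [this.2]⟩
  all_goals intro x hx
  all_goals first
    | exact ⟨(hN x hx).1, by linarith [(hN x hx).2]⟩
    | exact hP x hx

include hM'ne hM'comp hM'def in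
lemma F_mem : ∀ (s : S) (e : ℕ → Fin 3), F s e ∈ SSof M' s := by
  intro s e
  have h0 := M'_zero M' hM'ne hM'comp hM'def
  have key : ∀ n, ∀ (s : S) (e : ℕ → Fin 3), ∀ u ∈ SSof M' (run s e n),
      pS s e n + (1/5)^n * u ∈ SSof M' s := by
    intro n
    induction n with
    | zero => intro s e u hu; simpa [pS] using hu
    | succ n ih =>
      intro s e u hu
      have h1 := ih (tr s (e 0)) (fun k => e (k+1)) u hu
      have h2 := trans_mem M' hM'def s (e 0) _ h1
      have he : pS s e (n+1) + (1/5)^(n+1) * u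
          = ((pS (tr s (e 0)) (fun k => e (k+1)) n + (1/5)^n * u) + ((ow s (e 0) : ℕ):ℝ))/5 := by
        rw [pS_succ]; ring
      rw [he]
      exact h2
  have htend : Filter.Tendsto (fun n => pS s e n) Filter.atTop (nhds (F s e)) :=
    (summable_F s e).hasSum.tendsto_sum_nat
  apply (SS_closed M' hM'comp s).mem_of_tendsto htend
  apply Filter.Eventually.of_forall
  intro n
  have := key n s e 0 (SS_zero M' h0 (run s e n))
  simpa using this


end M'side

def Inv (X : Set ℝ) : S → ℝ → Prop
  | S.A, z => z ∈ X
  | S.B0, z => 5*z - 3 ∈ PPof X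
  | S.B1, z => 5*z ∈ X ∨ 5*z - 8 ∈ NNof X
  | S.C0, z => 5*z - 3 ∈ PPof X
  | S.C1, z => 5*z - 8 ∈ PPof X
  | S.C2, z => 5*z ∈ X ∨ 5*z - 13 ∈ NNof X

section M'side2

variable (M' : Set ℝ) (hM'ne : M'.Nonempty) (hM'comp : IsCompact M')
  (hM'def : M' = (fun x => x / 5) '' M' ∪ (fun x => x / 5 + 3 / 5) '' M' ∪
      (fun x => x / 5 + 4 / 5) '' M')

include hM'def in
lemma invN : ∀ y ∈ NNof M', Inv M' S.B0 y ∨ Inv M' S.B1 y := by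
  intro y hy
  rcases split_N M' hM'def y hy with h | h | h
  · exact Or.inr (Or.inl h)
  · exact Or.inl h
  · exact Or.inr (Or.inr h)

include hM'def in
lemma invP : ∀ y ∈ PPof M', Inv M' S.C0 y ∨ Inv M' S.C1 y ∨ Inv M' S.C2 y := by
  intro y hy
  rcases split_P M' hM'def y hy with h | h | h | h
  · exact Or.inr (Or.inr (Or.inl h))
  · exact Or.inl h
  · exact Or.inr (Or.inl h)
  · exact Or.inr (Or.inr (Or.inr h))

include hM'def in
lemma inv_step : ∀ (s : S) (z : ℝ), Inv M' s z →
    ∃ d : Fin 3, Inv M' (tr s d) (5*z - ((ow s d : ℕ):ℝ)) := by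
  have c0 : ((0:ℕ):ℝ) = 0 := by norm_num
  have c3 : ((3:ℕ):ℝ) = 3 := by norm_num
  have c8 : ((8:ℕ):ℝ) = 8 := by norm_num
  have c13 : ((13:ℕ):ℝ) = 13 := by norm_num
  intro s z hz
  cases s
  case A =>
    rcases split_M M' hM'def z hz with h | h
    · exact ⟨0, by show Inv M' S.A (5*z - ((0:ℕ):ℝ)); rw [c0, sub_zero]; exact h⟩
    · rcases invN M' hM'def _ h with h2 | h2
      · exact ⟨1, by show Inv M' S.B0 (5*z - ((3:ℕ):ℝ)); rw [c3]; exact h2⟩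
      · exact ⟨2, by show Inv M' S.B1 (5*z - ((3:ℕ):ℝ)); rw [c3]; exact h2⟩
  case B0 =>
    rcases invP M' hM'def _ hz with h2 | h2 | h2
    · exact ⟨0, by show Inv M' S.C0 (5*z - ((3:ℕ):ℝ)); rw [c3]; exact h2⟩
    · exact ⟨1, by show Inv M' S.C1 (5*z - ((3:ℕ):ℝ)); rw [c3]; exact h2⟩
    · exact ⟨2, by show Inv M' S.C2 (5*z - ((3:ℕ):ℝ)); rw [c3]; exact h2⟩
  case B1 =>
    rcases hz with h | h
    · exact ⟨0, by show Inv M' S.A (5*z - ((0:ℕ):ℝ)); rw [c0, sub_zero]; exact h⟩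
    · rcases invN M' hM'def _ h with h2 | h2
      · exact ⟨1, by show Inv M' S.B0 (5*z - ((8:ℕ):ℝ)); rw [c8]; exact h2⟩
      · exact ⟨2, by show Inv M' S.B1 (5*z - ((8:ℕ):ℝ)); rw [c8]; exact h2⟩
  case C0 =>
    rcases invP M' hM'def _ hz with h2 | h2 | h2
    · exact ⟨0, by show Inv M' S.C0 (5*z - ((3:ℕ):ℝ)); rw [c3]; exact h2⟩
    · exact ⟨1, by show Inv M' S.C1 (5*z - ((3:ℕ):ℝ)); rw [c3]; exact h2⟩
    · exact ⟨2, by show Inv M' S.C2 (5*z - ((3:ℕ):ℝ)); rw [c3]; exact h2⟩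
  case C1 =>
    rcases invP M' hM'def _ hz with h2 | h2 | h2
    · exact ⟨0, by show Inv M' S.C0 (5*z - ((8:ℕ):ℝ)); rw [c8]; exact h2⟩
    · exact ⟨1, by show Inv M' S.C1 (5*z - ((8:ℕ):ℝ)); rw [c8]; exact h2⟩
    · exact ⟨2, by show Inv M' S.C2 (5*z - ((8:ℕ):ℝ)); rw [c8]; exact h2⟩
  case C2 =>
    rcases hz with h | h
    · exact ⟨0, by show Inv M' S.A (5*z - ((0:ℕ):ℝ)); rw [c0, sub_zero]; exact h⟩
    · rcases invN M' hM'def _ h with h2 | h2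
      · exact ⟨1, by show Inv M' S.B0 (5*z - ((13:ℕ):ℝ)); rw [c13]; exact h2⟩
      · exact ⟨2, by show Inv M' S.B1 (5*z - ((13:ℕ):ℝ)); rw [c13]; exact h2⟩

include hM'ne hM'comp hM'def in
lemma inv_bound : ∀ (s : S) (z : ℝ), Inv M' s z → 0 ≤ z ∧ z ≤ 4 := by
  have hsub := M'_Icc M' hM'ne hM'comp hM'def
  have hSS := SS_bound M' hsub
  intro s z hz
  cases s
  case A => have := hsub hz; exact ⟨this.1, by linarith [this.2]⟩
  case B0 =>
    have := hSS S.C0 _ hz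
    constructor <;> linarith [this.1, this.2]
  case B1 =>
    rcases hz with h | h
    · have := hsub h; constructor <;> linarith [this.1, this.2]
    · have := hSS S.B0 _ h
      constructor <;> linarith [this.1, this.2]
  case C0 =>
    have := hSS S.C0 _ hz
    constructor <;> linarith [this.1, this.2]
  case C1 =>
    have := hSS S.C0 _ hz
    constructor <;> linarith [this.1, this.2]
  case C2 =>
    rcases hz with h | h
    · have := hsub h; constructor <;> linarith [this.1, this.2]
    · have := hSS S.B0 _ h
      constructor <;> linarith [this.1, this.2]

include hM'ne hM'comp hM'def in
lemma F_surj : ∀ z ∈ M', ∃ e : ℕ → Fin 3, F S.A e = z := by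
  intro z hz
  have hstep : ∀ p : {p : S × ℝ // Inv M' p.1 p.2},
      ∃ q : Fin 3 × {p : S × ℝ // Inv M' p.1 p.2},
        (q.2).1.1 = tr (p.1).1 q.1 ∧ (q.2).1.2 = 5*(p.1).2 - ((ow (p.1).1 q.1 : ℕ):ℝ) := by
    rintro ⟨⟨s, w⟩, hp⟩
    obtain ⟨d, hd⟩ := inv_step M' hM'def s w hp
    exact ⟨⟨d, ⟨⟨tr s d, 5*w - ((ow s d : ℕ):ℝ)⟩, hd⟩⟩, rfl, rfl⟩
  choose g hg using hstep
  have hzA : Inv M' S.A z := hz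
  let X : ℕ → {p : S × ℝ // Inv M' p.1 p.2} :=
    fun n => Nat.rec ⟨⟨S.A, z⟩, hzA⟩ (fun _ p => (g p).2) n
  let e : ℕ → Fin 3 := fun n => (g (X n)).1
  have hXs : ∀ n, (X n).1.1 = run S.A e n := by
    intro n
    induction n with
    | zero => rfl
    | succ n ih =>
      have h1 := (hg (X n)).1
      rw [run_succ']
      show (g (X n)).2.1.1 = _
      rw [h1, ih]
  have hXz : ∀ n, (X (n+1)).1.2 = 5*(X n).1.2 - ((outSeq S.A e n : ℕ):ℝ) := by
    intro n
    have h2 := (hg (X n)).2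
    show (g (X n)).2.1.2 = _
    rw [h2]
    unfold outSeq
    rw [hXs n]
  have hrec : ∀ n, z = pS S.A e n + (1/5)^n * (X n).1.2 := by
    intro n
    induction n with
    | zero => simp [pS, X]
    | succ n ih =>
      rw [ih]
      have h1 : pS S.A e (n+1) = pS S.A e n + ((outSeq S.A e n : ℕ):ℝ) * (1/5)^(n+1) :=
        Finset.sum_range_succ _ n
      rw [h1, hXz n]
      ring
  refine ⟨e, ?_⟩
  have htend : Filter.Tendsto (fun n => pS S.A e n) Filter.atTop (nhds (F S.A e)) :=
    (summable_F S.A e).hasSum.tendsto_sum_nat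
  have htend2 : Filter.Tendsto (fun n => pS S.A e n) Filter.atTop (nhds z) := by
    have hb : ∀ n : ℕ, |z - pS S.A e n| ≤ 4 * (1/5)^n := by
      intro n
      rw [hrec n]
      have hbd := inv_bound M' hM'ne hM'comp hM'def (X n).1.1 (X n).1.2 (X n).2
      have hp : (0:ℝ) < (1/5)^n := by positivity
      rw [abs_le]
      constructor <;> nlinarith [hbd.1, hbd.2]
    have h0 : Filter.Tendsto (fun n : ℕ => 4 * (1/5:ℝ)^n) Filter.atTop (nhds 0) := by
      have := tendsto_pow_atTop_nhds_zero_of_lt_one (by norm_num : (0:ℝ) ≤ 1/5) (by norm_num)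
      simpa using this.const_mul 4
    rw [tendsto_iff_dist_tendsto_zero]
    apply squeeze_zero (fun n => dist_nonneg) (fun n => ?_) h0
    rw [Real.dist_eq, abs_sub_comm]
    exact hb n
  exact tendsto_nhds_unique htend htend2

end M'side2

end RRX

open RRX in
theorem set135_lipschitz_equivalent_set145
    (M M' : Set ℝ)
    (hMne : M.Nonempty) (hMcomp : IsCompact M)
    (hMdef : M = (fun x => x / 5) '' M ∪ (fun x => x / 5 + 2 / 5) '' M ∪
      (fun x => x / 5 + 4 / 5) '' M)
    (hM'ne : M'.Nonempty) (hM'comp : IsCompact M')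
    (hM'def : M' = (fun x => x / 5) '' M' ∪ (fun x => x / 5 + 3 / 5) '' M' ∪
      (fun x => x / 5 + 4 / 5) '' M') :
    LipschitzEquivalent M M' := by
  classical
  have hsubM : M ⊆ Set.Icc 0 1 := M_Icc M hMne hMcomp hMdef
  have hM0 : (0:ℝ) ∈ M := M_zero M hMne hMcomp hMdef
  set f : ℝ → ℝ := fun x =>
    if h : ∃ e : ℕ → Fin 3, pc e = x then F S.A (Classical.choose h) else x with hf
  have hfe : ∀ e : ℕ → Fin 3, f (pc e) = F S.A e := by
    intro e
    have hex : ∃ e' : ℕ → Fin 3, pc e' = pc e := ⟨e, rfl⟩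
    have : f (pc e) = F S.A (Classical.choose hex) := dif_pos hex
    rw [this]
    have hc : pc (Classical.choose hex) = pc e := Classical.choose_spec hex
    rw [pc_inj hc]
  have hmaps : Set.MapsTo f M M' := by
    intro x hx
    obtain ⟨e, rfl⟩ := exists_code M hMdef hsubM x hx
    rw [hfe e]
    exact F_mem M' hM'ne hM'comp hM'def S.A e
  have hmain : ∀ x ∈ M, ∀ y ∈ M, x ≠ y →
      (2/25) * dist x y ≤ dist (f x) (f y) ∧ dist (f x) (f y) ≤ 15 * dist x y := by
    intro x hx y hy hxy
    obtain ⟨e, rfl⟩ := exists_code M hMdef hsubM x hx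
    obtain ⟨e', rfl⟩ := exists_code M hMdef hsubM y hy
    have hne : e ≠ e' := fun h => hxy (by rw [h])
    obtain ⟨n, hlt, hnd⟩ := first_diff e e' hne
    have hpc := pc_dist e e' n hlt hnd
    have hF := F_dist e e' n hlt hnd
    rw [hfe e, hfe e', Real.dist_eq, Real.dist_eq]
    constructor
    · calc (2/25) * |pc e - pc e'| ≤ (2/25) * (1/5)^n := by
            have := hpc.2; linarith
        _ ≤ |F S.A e - F S.A e'| := hF.1
    · calc |F S.A e - F S.A e'| ≤ 3 * (1/5)^n := hF.2
        _ = 15 * ((1/5) * (1/5)^n) := by ring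
        _ ≤ 15 * |pc e - pc e'| := by
            have := hpc.1; linarith
  have hinj : Set.InjOn f M := by
    intro x hx y hy hfxy
    by_contra hxy
    have h1 := (hmain x hx y hy hxy).1
    rw [hfxy] at h1
    simp only [dist_self] at h1
    have h2 : 0 < dist x y := dist_pos.mpr hxy
    linarith
  have hsurj : Set.SurjOn f M M' := by
    intro z hz
    obtain ⟨e, he⟩ := F_surj M' hM'ne hM'comp hM'def z hz
    exact ⟨pc e, pc_mem M hMcomp hMdef e hM0, by rw [hfe e, he]⟩
  refine ⟨f, 15, by norm_num, ⟨hmaps, hinj, hsurj⟩, ?_⟩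
  intro x hx y hy
  by_cases hxy : x = y
  · subst hxy
    simp
  · obtain ⟨h1, h2⟩ := hmain x hx y hy hxy
    have hd : 0 ≤ dist x y := dist_nonneg
    constructor
    · calc (15:ℝ)⁻¹ * dist x y ≤ (2/25) * dist x y := by nlinarith
        _ ≤ dist (f x) (f y) := h1
    · exact h2
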